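/- Let H and Q be real Hilbert spaces, a : H × H → ℝ and b : H × Q → ℝ bilinear forms, and β > 0 such that the global inf-sup condition holds: for all (τ,v) ∈ H × Q, β(‖τ‖_H + ‖v‖_Q) ≤ sup over nonzero (ξ,w) ∈ H × Q of [a(τ,ξ) + b(ξ,v) + b(τ,w)]/(‖ξ‖_H + ‖w‖_Q). Let λ, λ_h ∈ ℝ, σ, σ_h ∈ H and u, u_h ∈ Q with ‖u_h‖_Q = 1 satisfy: a(σ,τ) + b(τ,u) = 0 for all τ ∈ H; b(σ,v) = −λ⟨u,v⟩ for all v ∈ Q; and b(σ_h,v) = −λ_h⟨u_h,v⟩ for all v ∈ Q. Then for every w₀ ∈ Q, ‖σ − σ_h‖_H + ‖u − u_h‖_Q ≤ (1/β)[ S + |λ_h − λ| + |λ|(‖u − w₀‖_Q + ‖w₀ − u_h‖_Q) ], where S denotes the sup over nonzero τ ∈ H of (−a(σ_h,τ) − b(τ,u_h))/‖τ‖_H. -/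

import Mathlib

open RealInnerProductSpace

/-- Abstract form of the paper's reliability lemma (Lemma 5.4): under the global inf-sup
condition, the total error `‖σ − σ_h‖ + ‖u − u_h‖` is bounded by the residual supremum
`S`, the eigenvalue error `|λ_h − λ|`, and `|λ|(‖u − w₀‖ + ‖w₀ − u_h‖)` for any `w₀`. -/
theorem reliability_bound
    {H Q : Type*} [NormedAddCommGroup H] [InnerProductSpace ℝ H] [CompleteSpace H]
    [NormedAddCommGroup Q] [InnerProductSpace ℝ Q] [CompleteSpace Q]
    (a : H →ₗ[ℝ] H →ₗ[ℝ] ℝ) (b : H →ₗ[ℝ] Q →ₗ[ℝ] ℝ) (β : ℝ) (hβ : 0 < β)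
    (hinfsup : ∀ (τ : H) (v : Q), β * (‖τ‖ + ‖v‖) ≤
      ⨆ ξw : {p : H × Q // p ≠ 0},
        (a τ ξw.1.1 + b ξw.1.1 v + b τ ξw.1.2) / (‖ξw.1.1‖ + ‖ξw.1.2‖))
    (lam lamh : ℝ) (σ σh : H) (u uh : Q) (huh : ‖uh‖ = 1)
    (h1 : ∀ τ : H, a σ τ + b τ u = 0)
    (h2 : ∀ v : Q, b σ v = -lam * ⟪u, v⟫)
    (h2h : ∀ v : Q, b σh v = -lamh * ⟪uh, v⟫) :
    ∀ w₀ : Q, ‖σ - σh‖ + ‖u - uh‖ ≤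
      (1 / β) * ((⨆ τ : {τ : H // τ ≠ 0}, (-(a σh τ.1) - b τ.1 uh) / ‖τ.1‖) +
        |lamh - lam| + |lam| * (‖u - w₀‖ + ‖w₀ - uh‖)) := by
  intro w₀
  set S : ℝ := ⨆ τ : {τ : H // τ ≠ 0}, (-(a σh τ.1) - b τ.1 uh) / ‖τ.1‖ with hSdef
  set t : ℝ := ‖u - w₀‖ + ‖w₀ - uh‖ with htdef
  have ht0 : 0 ≤ t := by rw [htdef]; positivity
  have hEu : ‖u - uh‖ ≤ t := by
    have h : u - uh = (u - w₀) + (w₀ - uh) := by abel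
    rw [h, htdef]; exact norm_add_le _ _
  have hkey := hinfsup (σ - σh) (u - uh)
  -- numerator identity
  have hnum : ∀ (ξ : H) (w : Q),
      a (σ - σh) ξ + b ξ (u - uh) + b (σ - σh) w =
      (-(a σh ξ) - b ξ uh) + (lamh - lam) * ⟪uh, w⟫ - lam * ⟪u - uh, w⟫ := by
    intro ξ w
    have e1 : a σ ξ + b ξ u = 0 := h1 ξ
    have e2 : b σ w = -lam * ⟪u, w⟫ := h2 w
    have e3 : b σh w = -lamh * ⟪uh, w⟫ := h2h w
    have e4 : ⟪u - uh, w⟫ = ⟪u, w⟫ - ⟪uh, w⟫ := inner_sub_left _ _ _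
    simp only [map_sub, LinearMap.sub_apply]
    linear_combination e1 + e2 - e3 + lam * e4
  by_cases hB : BddAbove (Set.range fun τ : {τ : H // τ ≠ 0} =>
      (-(a σh τ.1) - b τ.1 uh) / ‖τ.1‖)
  · -- bounded case
    have hS0 : 0 ≤ S := by
      rcases isEmpty_or_nonempty {τ : H // τ ≠ 0} with he | hne
      · haveI := he
        rw [hSdef]
        exact Real.iSup_nonneg fun i => (he.false i).elim
      · obtain ⟨τ₀⟩ := hne
        have hle1 := le_ciSup hB τ₀
        have hle2 := le_ciSup hB ⟨-τ₀.1, neg_ne_zero.mpr τ₀.2⟩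
        simp only [map_neg, LinearMap.neg_apply, norm_neg, neg_neg, sub_neg_eq_add] at hle2
        have hpos : (0:ℝ) < ‖τ₀.1‖ := norm_pos_iff.mpr τ₀.2
        have hsum : (-(a σh τ₀.1) - b τ₀.1 uh) / ‖τ₀.1‖ +
            (a σh τ₀.1 + b τ₀.1 uh) / ‖τ₀.1‖ = 0 := by
          field_simp
          ring
        linarith
    have hbound : ∀ ξw : {p : H × Q // p ≠ 0},
        (a (σ - σh) ξw.1.1 + b ξw.1.1 (u - uh) + b (σ - σh) ξw.1.2) /
          (‖ξw.1.1‖ + ‖ξw.1.2‖) ≤ S + |lamh - lam| + |lam| * t := by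
      rintro ⟨⟨ξ, w⟩, hp⟩
      have hd : (0:ℝ) < ‖ξ‖ + ‖w‖ := by
        rcases eq_or_ne ξ 0 with rfl | hξ
        · have hw : w ≠ 0 := by
            rintro rfl; exact hp rfl
          have := norm_pos_iff.mpr hw
          simp only [norm_zero, zero_add]; exact this
        · have := norm_pos_iff.mpr hξ
          linarith [norm_nonneg w]
      rw [div_le_iff₀ hd, hnum ξ w]
      have hN : (-(a σh ξ) - b ξ uh) ≤ S * ‖ξ‖ := by
        rcases eq_or_ne ξ 0 with rfl | hξ
        · simp
        · have hle := le_ciSup hB ⟨ξ, hξ⟩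
          have hξn : (0:ℝ) < ‖ξ‖ := norm_pos_iff.mpr hξ
          calc (-(a σh ξ) - b ξ uh)
              = ((-(a σh ξ) - b ξ uh) / ‖ξ‖) * ‖ξ‖ := by field_simp
            _ ≤ S * ‖ξ‖ := mul_le_mul_of_nonneg_right hle hξn.le
      have h2b : (lamh - lam) * ⟪uh, w⟫ ≤ |lamh - lam| * ‖w‖ := by
        calc (lamh - lam) * ⟪uh, w⟫ ≤ |(lamh - lam) * ⟪uh, w⟫| := le_abs_self _
          _ = |lamh - lam| * |⟪uh, w⟫| := abs_mul _ _
          _ ≤ |lamh - lam| * (‖uh‖ * ‖w‖) := by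
              gcongr
              exact abs_real_inner_le_norm _ _
          _ = |lamh - lam| * ‖w‖ := by rw [huh, one_mul]
      have h3b : -(lam * ⟪u - uh, w⟫) ≤ |lam| * t * ‖w‖ := by
        calc -(lam * ⟪u - uh, w⟫) ≤ |lam * ⟪u - uh, w⟫| := neg_le_abs _
          _ = |lam| * |⟪u - uh, w⟫| := abs_mul _ _
          _ ≤ |lam| * (‖u - uh‖ * ‖w‖) := by
              gcongr
              exact abs_real_inner_le_norm _ _
          _ ≤ |lam| * (t * ‖w‖) := by gcongr
          _ = |lam| * t * ‖w‖ := (mul_assoc _ _ _).symm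
      nlinarith [mul_nonneg hS0 (norm_nonneg w),
        mul_nonneg (abs_nonneg (lamh - lam)) (norm_nonneg ξ),
        mul_nonneg (mul_nonneg (abs_nonneg lam) ht0) (norm_nonneg ξ)]
    have hC0 : (0:ℝ) ≤ S + |lamh - lam| + |lam| * t := by positivity
    have hsup := Real.iSup_le hbound hC0
    have hchain : β * (‖σ - σh‖ + ‖u - uh‖) ≤ S + |lamh - lam| + |lam| * t :=
      le_trans hkey hsup
    rw [one_div, ← div_eq_inv_mul, le_div_iff₀ hβ]
    linarith [hchain]
  · -- unbounded case: both suprema are (junk) zero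
    have hgB : ¬ BddAbove (Set.range fun ξw : {p : H × Q // p ≠ 0} =>
        (a (σ - σh) ξw.1.1 + b ξw.1.1 (u - uh) + b (σ - σh) ξw.1.2) /
          (‖ξw.1.1‖ + ‖ξw.1.2‖)) := by
      rintro ⟨M, hM⟩
      apply hB
      refine ⟨M, ?_⟩
      rintro x ⟨τ, rfl⟩
      have hp : ((τ.1, (0:Q)) : H × Q) ≠ 0 := by
        simp [Prod.ext_iff, τ.2]
      have hMτ := hM (Set.mem_range_self (⟨(τ.1, 0), hp⟩ : {p : H × Q // p ≠ 0}))
      have heq : (a (σ - σh) τ.1 + b τ.1 (u - uh) + b (σ - σh) (0:Q)) /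
          (‖τ.1‖ + ‖(0:Q)‖) = (-(a σh τ.1) - b τ.1 uh) / ‖τ.1‖ := by
        rw [hnum]
        simp
      rw [heq] at hMτ
      exact hMτ
    have hS0 : S = 0 := Real.iSup_of_not_bddAbove hB
    have hsup0 : (⨆ ξw : {p : H × Q // p ≠ 0},
        (a (σ - σh) ξw.1.1 + b ξw.1.1 (u - uh) + b (σ - σh) ξw.1.2) /
          (‖ξw.1.1‖ + ‖ξw.1.2‖)) = 0 := Real.iSup_of_not_bddAbove hgB
    rw [hsup0] at hkey
    have hL : ‖σ - σh‖ + ‖u - uh‖ ≤ 0 := nonpos_of_mul_nonpos_right hkey hβ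
    have hR : (0:ℝ) ≤ (1 / β) * (S + |lamh - lam| + |lam| * t) := by
      rw [hS0]
      positivity
    linarith
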